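/- arXiv:1908.04019 — 4 statements merged into one kernel-verified Lean document; each statement's English description precedes it below -/
import Mathlib

section
/- Let α be a measurable space, d ≥ 1 an integer, τ : α → α a measurable bijection with measurable inverse, ψ : α → ℤ^d a measurable function, and χ : ℤ^d → ℝ an additive group homomorphism. Let μ be a finite measure on α that is (e^{χ∘ψ}, τ)-conformal, i.e. μ(τ(E)) = ∫_E exp(χ(ψ(x))) dμ(x) for every measurable set E ⊆ α. Let m be the Maharam measure on α × ℤ^d determined by m(E × {v}) = e^{−χ(v)} μ(E) for measurable E ⊆ α and v ∈ ℤ^d. Then m(α × {v}) = e^{−χ(v)} μ(α) < ∞ for every v ∈ ℤ^d (so m is locally finite), and m is invariant under the skew product T(x,v) = (τ(x), v + ψ(x)): m(T⁻¹(A)) = m(A) for every measurable A ⊆ α × ℤ^d. -/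
open MeasureTheory Filter

/-- Maharam measures are locally finite (finite on each slice) and invariant
under the skew product `T(x,v) = (τ x, v + ψ x)`. -/
theorem maharam_measure_locally_finite_and_invariant
    {α : Type*} [MeasurableSpace α] (d : ℕ) (hd : 1 ≤ d)
    (τ τinv : α → α) (hτ : Measurable τ) (hτinv : Measurable τinv)
    (hleft : Function.LeftInverse τinv τ) (hright : Function.RightInverse τinv τ)
    (ψ : α → (Fin d → ℤ)) (hψ : Measurable ψ)
    (χ : (Fin d → ℤ) →+ ℝ)
    (μ : Measure α) [IsFiniteMeasure μ]
    (hconf : ∀ E : Set α, MeasurableSet E →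
      μ (τ '' E) = ENNReal.ofReal (∫ x in E, Real.exp (χ (ψ x)) ∂μ))
    (m : Measure (α × (Fin d → ℤ)))
    (hm : ∀ (E : Set α) (v : Fin d → ℤ), MeasurableSet E →
      m (E ×ˢ ({v} : Set (Fin d → ℤ))) = ENNReal.ofReal (Real.exp (-(χ v))) * μ E) :
    (∀ v : Fin d → ℤ,
      m (Set.univ ×ˢ ({v} : Set (Fin d → ℤ)))
          = ENNReal.ofReal (Real.exp (-(χ v))) * μ Set.univ ∧
      m (Set.univ ×ˢ ({v} : Set (Fin d → ℤ))) < ⊤) ∧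
    (∀ A : Set (α × (Fin d → ℤ)), MeasurableSet A →
      m ((fun p : α × (Fin d → ℤ) => (τ p.1, p.2 + ψ p.1)) ⁻¹' A) = m A) := by
  -- image of measurable sets under τ is measurable (τ '' X = τinv ⁻¹' X)
  have himg : ∀ X : Set α, τ '' X = τinv ⁻¹' X := by
    intro X
    ext y
    constructor
    · rintro ⟨x, hx, rfl⟩
      simpa [hleft x] using hx
    · intro hy
      exact ⟨τinv y, hy, hright y⟩
  have hmeasim : ∀ X : Set α, MeasurableSet X → MeasurableSet (τ '' X) := by
    intro X hX
    rw [himg]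
    exact hτinv hX
  -- slice decomposition of m
  have hslice : ∀ B : Set (α × (Fin d → ℤ)), MeasurableSet B →
      m B = ∑' v : Fin d → ℤ,
        ENNReal.ofReal (Real.exp (-(χ v))) * μ {x | (x, v) ∈ B} := by
    intro B hB
    have hBv : ∀ v : Fin d → ℤ, MeasurableSet {x | (x, v) ∈ B} := by
      intro v
      exact (measurable_id.prodMk measurable_const) hB
    have hdecomp : B = ⋃ v : Fin d → ℤ, {x | (x, v) ∈ B} ×ˢ ({v} : Set (Fin d → ℤ)) := by
      ext ⟨x, v⟩
      simp only [Set.mem_iUnion, Set.mem_prod, Set.mem_setOf_eq, Set.mem_singleton_iff]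
      constructor
      · intro h
        exact ⟨v, h, rfl⟩
      · rintro ⟨i, h, rfl⟩
        exact h
    have hdisj : Pairwise (Function.onFun Disjoint
        (fun v : Fin d → ℤ => {x | (x, v) ∈ B} ×ˢ ({v} : Set (Fin d → ℤ)))) := by
      intro v w hvw
      rw [Function.onFun, Set.disjoint_left]
      rintro ⟨x, u⟩ ⟨_, hu⟩ ⟨_, hu'⟩
      exact hvw ((Set.eq_of_mem_singleton hu).symm.trans (Set.eq_of_mem_singleton hu'))
    have hmeas : ∀ v : Fin d → ℤ,
        MeasurableSet ({x | (x, v) ∈ B} ×ˢ ({v} : Set (Fin d → ℤ))) :=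
      fun v => (hBv v).prod (measurableSet_singleton v)
    calc m B = m (⋃ v : Fin d → ℤ, {x | (x, v) ∈ B} ×ˢ ({v} : Set (Fin d → ℤ))) := by
          rw [← hdecomp]
      _ = ∑' v : Fin d → ℤ, m ({x | (x, v) ∈ B} ×ˢ ({v} : Set (Fin d → ℤ))) :=
          measure_iUnion hdisj hmeas
      _ = ∑' v : Fin d → ℤ, ENNReal.ofReal (Real.exp (-(χ v))) * μ {x | (x, v) ∈ B} := by
          exact tsum_congr fun v => hm _ v (hBv v)
  -- conformality on level sets of ψ
  have hconf' : ∀ (u : Fin d → ℤ) (S : Set α), MeasurableSet S →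
      μ (ψ ⁻¹' {u} ∩ τ ⁻¹' S)
        = ENNReal.ofReal (Real.exp (-(χ u))) * μ (S ∩ τ '' (ψ ⁻¹' {u})) := by
    intro u S hS
    set E : Set α := ψ ⁻¹' {u} ∩ τ ⁻¹' S with hE
    have hEmeas : MeasurableSet E := (hψ (measurableSet_singleton u)).inter (hτ hS)
    have himgE : τ '' E = S ∩ τ '' (ψ ⁻¹' {u}) := by
      rw [hE, Set.image_inter_preimage, Set.inter_comm]
    have hint : (∫ x in E, Real.exp (χ (ψ x)) ∂μ) = (μ E).toReal * Real.exp (χ u) := by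
      rw [setIntegral_congr_fun hEmeas (g := fun _ => Real.exp (χ u))
        (fun x hx => by rw [hx.1])]
      simp [smul_eq_mul]
      rfl
    have hkey : μ (S ∩ τ '' (ψ ⁻¹' {u})) = ENNReal.ofReal (Real.exp (χ u)) * μ E := by
      rw [← himgE, hconf E hEmeas, hint, ENNReal.ofReal_mul ENNReal.toReal_nonneg,
        ENNReal.ofReal_toReal (measure_ne_top μ E), mul_comm]
    rw [hkey, ← mul_assoc, ← ENNReal.ofReal_mul (Real.exp_nonneg _), ← Real.exp_add,
      neg_add_cancel, Real.exp_zero, ENNReal.ofReal_one, one_mul]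
  -- partition of α by τ-images of level sets of ψ
  have hpart : ∀ S : Set α, MeasurableSet S →
      (∑' u : Fin d → ℤ, μ (S ∩ τ '' (ψ ⁻¹' {u}))) = μ S := by
    intro S hS
    have hdecomp : S = ⋃ u : Fin d → ℤ, S ∩ τ '' (ψ ⁻¹' {u}) := by
      ext x
      simp only [Set.mem_iUnion, Set.mem_inter_iff]
      constructor
      · intro hx
        exact ⟨ψ (τinv x), hx, ⟨τinv x, rfl, hright x⟩⟩
      · rintro ⟨u, hx, _⟩
        exact hx
    have hdisj : Pairwise (Function.onFun Disjoint
        (fun u : Fin d → ℤ => S ∩ τ '' (ψ ⁻¹' {u}))) := by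
      intro u w huw
      rw [Function.onFun, Set.disjoint_left]
      rintro x ⟨-, a, ha, rfl⟩ ⟨-, b, hb, hab⟩
      apply huw
      have hba : b = a := by
        have := congrArg τinv hab
        rwa [hleft, hleft] at this
      have h1 : ψ a = u := ha
      have h2 : ψ b = w := hb
      rw [← h1, ← h2, hba]
    have hmeas : ∀ u : Fin d → ℤ, MeasurableSet (S ∩ τ '' (ψ ⁻¹' {u})) :=
      fun u => hS.inter (hmeasim _ (hψ (measurableSet_singleton u)))
    rw [← measure_iUnion hdisj hmeas, ← hdecomp]
  constructor
  · intro v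
    refine ⟨hm Set.univ v MeasurableSet.univ, ?_⟩
    rw [hm Set.univ v MeasurableSet.univ]
    exact ENNReal.mul_lt_top ENNReal.ofReal_lt_top (measure_lt_top μ _)
  · intro A hA
    have hT : Measurable (fun p : α × (Fin d → ℤ) => (τ p.1, p.2 + ψ p.1)) :=
      (hτ.comp measurable_fst).prodMk (measurable_snd.add (hψ.comp measurable_fst))
    have hTA : MeasurableSet ((fun p : α × (Fin d → ℤ) => (τ p.1, p.2 + ψ p.1)) ⁻¹' A) :=
      hT hA
    rw [hslice A hA, hslice _ hTA]
    -- the w-slice of T⁻¹ A decomposed along level sets of ψ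
    have hAv : ∀ v : Fin d → ℤ, MeasurableSet {x | (x, v) ∈ A} := by
      intro v
      exact (measurable_id.prodMk measurable_const) hA
    have hsliceT : ∀ w : Fin d → ℤ,
        μ {x | (τ x, w + ψ x) ∈ A}
          = ∑' u : Fin d → ℤ, μ (ψ ⁻¹' {u} ∩ τ ⁻¹' {x | (x, w + u) ∈ A}) := by
      intro w
      have hdecomp : {x | (τ x, w + ψ x) ∈ A}
          = ⋃ u : Fin d → ℤ, ψ ⁻¹' {u} ∩ τ ⁻¹' {x | (x, w + u) ∈ A} := by
        ext x
        simp only [Set.mem_iUnion, Set.mem_inter_iff, Set.mem_preimage,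
          Set.mem_singleton_iff, Set.mem_setOf_eq]
        constructor
        · intro hx
          exact ⟨ψ x, rfl, hx⟩
        · rintro ⟨u, rfl, hx⟩
          exact hx
      have hdisj : Pairwise (Function.onFun Disjoint
          (fun u : Fin d → ℤ => ψ ⁻¹' {u} ∩ τ ⁻¹' {x | (x, w + u) ∈ A})) := by
        intro u v huv
        rw [Function.onFun, Set.disjoint_left]
        rintro x ⟨hu, -⟩ ⟨hv, -⟩
        exact huv ((Set.eq_of_mem_singleton hu).symm.trans (Set.eq_of_mem_singleton hv))
      have hmeas : ∀ u : Fin d → ℤ,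
          MeasurableSet (ψ ⁻¹' {u} ∩ τ ⁻¹' {x | (x, w + u) ∈ A}) :=
        fun u => (hψ (measurableSet_singleton u)).inter (hτ (hAv _))
      rw [hdecomp, measure_iUnion hdisj hmeas]
    calc
      ∑' w : Fin d → ℤ, ENNReal.ofReal (Real.exp (-(χ w)))
          * μ {x | (x, w) ∈ (fun p : α × (Fin d → ℤ) => (τ p.1, p.2 + ψ p.1)) ⁻¹' A}
        = ∑' w : Fin d → ℤ, ∑' u : Fin d → ℤ,
            ENNReal.ofReal (Real.exp (-(χ (w + u))))
              * μ ({x | (x, w + u) ∈ A} ∩ τ '' (ψ ⁻¹' {u})) := by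
          refine tsum_congr fun w => ?_
          have : {x | (x, w) ∈ (fun p : α × (Fin d → ℤ) => (τ p.1, p.2 + ψ p.1)) ⁻¹' A}
              = {x | (τ x, w + ψ x) ∈ A} := rfl
          rw [this, hsliceT w, ENNReal.tsum_mul_left.symm]
          refine tsum_congr fun u => ?_
          rw [hconf' u _ (hAv (w + u)), ← mul_assoc,
            ← ENNReal.ofReal_mul (Real.exp_nonneg _), ← Real.exp_add, map_add,
            neg_add]
      _ = ∑' u : Fin d → ℤ, ∑' v : Fin d → ℤ,
            ENNReal.ofReal (Real.exp (-(χ v)))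
              * μ ({x | (x, v) ∈ A} ∩ τ '' (ψ ⁻¹' {u})) := by
          rw [ENNReal.tsum_comm]
          refine tsum_congr fun u => ?_
          exact (Equiv.addRight u).tsum_eq fun v =>
            ENNReal.ofReal (Real.exp (-(χ v)))
              * μ ({x | (x, v) ∈ A} ∩ τ '' (ψ ⁻¹' {u}))
      _ = ∑' v : Fin d → ℤ, ENNReal.ofReal (Real.exp (-(χ v))) * μ {x | (x, v) ∈ A} := by
          rw [ENNReal.tsum_comm]
          refine tsum_congr fun v => ?_
          rw [ENNReal.tsum_mul_left, hpart _ (hAv v)]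
end

section
/- Let (X, 𝒜, μ) be a σ-finite measure space and T : X → X a measurable bijection with measurable inverse that preserves μ. Suppose there exists an increasing sequence (Y_n)_{n≥1} of measurable subsets of X (an almost invariant box sequence) such that X = ⋃_n Y_n, μ(Y_n) < ∞ for every n, and lim_{n→∞} μ(T(Y_n) \ Y_n) = 0. Then T is conservative with respect to μ: for every measurable set s with μ(s) > 0 there exist a point x ∈ s and an integer n ≥ 1 with T^n(x) ∈ s. -/
open MeasureTheory Filter

/-- Boxes lemma: a measure-preserving bijection admitting an almost invariant
box sequence is conservative. -/
theorem conservative_of_box_sequence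
    {X : Type*} [MeasurableSpace X] (μ : Measure X) [SigmaFinite μ]
    (T S : X → X) (hT : Measurable T) (hS : Measurable S)
    (hST : Function.LeftInverse S T) (hTS : Function.RightInverse S T)
    (hpres : MeasurePreserving T μ μ)
    (Y : ℕ → Set X) (hYmono : Monotone Y) (hYmeas : ∀ n, MeasurableSet (Y n))
    (hYunion : (⋃ n, Y n) = Set.univ) (hYfin : ∀ n, μ (Y n) < ⊤)
    (hYlim : Tendsto (fun n => μ (T '' Y n \ Y n)) atTop (nhds 0)) :
    ∀ s : Set X, MeasurableSet s → 0 < μ s →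
      ∃ x ∈ s, ∃ n : ℕ, 1 ≤ n ∧ T^[n] x ∈ s := by
  intro s hs hμs
  by_contra hcon
  push_neg at hcon
  -- hcon : ∀ x ∈ s, ∀ n, 1 ≤ n → T^[n] x ∉ s
  -- S is measure preserving
  set e : X ≃ᵐ X := ⟨⟨T, S, hST, hTS⟩, hT, hS⟩ with he
  have hSpres : MeasurePreserving S μ μ := MeasurePreserving.symm e hpres
  have himg : ∀ B : Set X, T '' B = S ⁻¹' B := fun B =>
    congrFun (Set.image_eq_preimage_of_inverse hST hTS) B
  -- find N with positive measure intersection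
  obtain ⟨N, hN⟩ : ∃ N, 0 < μ (s ∩ Y N) := by
    by_contra h
    push_neg at h
    simp only [nonpos_iff_eq_zero] at h
    have : μ s = 0 := by
      have : s ⊆ ⋃ n, s ∩ Y n := by
        rw [← Set.inter_iUnion, hYunion, Set.inter_univ]
      exact measure_mono_null this (measure_iUnion_null h)
    exact absurd this hμs.ne'
  set s' : Set X := s ∩ Y N with hs'def
  have hs' : MeasurableSet s' := hs.inter (hYmeas N)
  set ε : ENNReal := μ s' with hεdef
  have hε : 0 < ε := hN
  have hεfin : ε < ⊤ := lt_of_le_of_lt (measure_mono Set.inter_subset_right) (hYfin N)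
  -- the iterated images of s'
  set A : ℕ → Set X := fun k => T^[k] '' s' with hAdef
  have hAeq : ∀ k, A k = S^[k] ⁻¹' s' := fun k =>
    congrFun (Set.image_eq_preimage_of_inverse (hST.iterate k) (hTS.iterate k)) s'
  have hAmeas : ∀ k, MeasurableSet (A k) := fun k => by
    rw [hAeq k]; exact (hS.iterate k) hs'
  have hAmeasure : ∀ k, μ (A k) = ε := fun k => by
    rw [hAeq k]
    exact (hSpres.iterate k).measure_preimage hs'.nullMeasurableSet
  -- pairwise disjoint
  have hdisj_lt : ∀ j k, j < k → Disjoint (A j) (A k) := by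
    intro j k hjk
    rw [Set.disjoint_left]
    rintro x ⟨a, ha, rfl⟩ ⟨b, hb, hba⟩
    have key : T^[k - j] b = a := by
      have h1 : T^[k] b = T^[j] (T^[k - j] b) := by
        rw [← Function.iterate_add_apply]
        congr 1
        omega
      have := congrArg (S^[j]) hba
      rwa [h1, hST.iterate j, hST.iterate j] at this
    have := hcon b hb.1 (k - j) (by omega)
    rw [key] at this
    exact this ha.1
  have hdisj : Pairwise (Function.onFun Disjoint A) := by
    intro j k hjk
    rcases lt_or_gt_of_ne hjk with h | h
    · exact hdisj_lt j k h
    · exact (hdisj_lt k j h).symm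
  -- choose n ≥ N with μ (T '' Y n \ Y n) < ε
  obtain ⟨n, hnN, hnδ⟩ : ∃ n, N ≤ n ∧ μ (T '' Y n \ Y n) < ε := by
    have h1 := hYlim.eventually_lt_const hε
    obtain ⟨n, hn1, hn2⟩ := (eventually_ge_atTop N |>.and h1).exists
    exact ⟨n, hn1, hn2⟩
  set D : Set X := T '' Y n \ Y n with hDdef
  have hDmeas : MeasurableSet D := by
    rw [hDdef, himg]
    exact ((hYmeas n).preimage hS).diff (hYmeas n)
  set δ : ENNReal := μ D with hδdef
  have hsub : s' ⊆ Y n := Set.inter_subset_right.trans (hYmono hnN)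
  -- key induction
  have key : ∀ m, μ (A m \ Y n) ≤ ∑ k ∈ Finset.Icc 1 m, μ (A k ∩ D) := by
    intro m
    induction m with
    | zero =>
      have : A 0 \ Y n = ∅ := by
        rw [Set.diff_eq_empty]
        simpa [hAdef] using hsub
      simp [this]
    | succ m ih =>
      have hstep : A (m + 1) \ Y n ⊆ S ⁻¹' (A m \ Y n) ∪ (A (m + 1) ∩ D) := by
        rintro x ⟨⟨a, ha, rfl⟩, hxn⟩
        by_cases hy : T^[m] a ∈ Y n
        · right
          exact ⟨⟨a, ha, rfl⟩,
            ⟨T^[m] a, hy, (Function.iterate_succ_apply' T m a).symm⟩, hxn⟩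
        · left
          show S (T^[m + 1] a) ∈ A m \ Y n
          rw [Function.iterate_succ_apply', hST]
          exact ⟨⟨a, ha, rfl⟩, hy⟩
      calc μ (A (m + 1) \ Y n) ≤ μ (S ⁻¹' (A m \ Y n)) + μ (A (m + 1) ∩ D) :=
            le_trans (measure_mono hstep) (measure_union_le _ _)
        _ = μ (A m \ Y n) + μ (A (m + 1) ∩ D) := by
            rw [hSpres.measure_preimage ((hAmeas m).diff (hYmeas n)).nullMeasurableSet]
        _ ≤ (∑ k ∈ Finset.Icc 1 m, μ (A k ∩ D)) + μ (A (m + 1) ∩ D) :=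
            add_le_add_left ih _
        _ = ∑ k ∈ Finset.Icc 1 (m + 1), μ (A k ∩ D) := by
            rw [Finset.sum_Icc_succ_top (by omega : 1 ≤ m + 1)]
  -- the sum is at most δ
  have hsum_le : ∀ m, ∑ k ∈ Finset.Icc 1 m, μ (A k ∩ D) ≤ δ := by
    intro m
    have hdisjD : (↑(Finset.Icc 1 m) : Set ℕ).PairwiseDisjoint fun k => A k ∩ D := by
      intro j _ k _ hjk
      exact (hdisj hjk).mono Set.inter_subset_left Set.inter_subset_left
    rw [← measure_biUnion_finset hdisjD fun k _ => (hAmeas k).inter hDmeas]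
    exact measure_mono (Set.iUnion₂_subset fun k _ => Set.inter_subset_right)
  -- lower bound on intersection with Y n
  have hlow : ∀ m, ε - δ ≤ μ (A m ∩ Y n) := by
    intro m
    have h1 : ε ≤ μ (A m ∩ Y n) + δ := by
      calc ε = μ (A m) := (hAmeasure m).symm
        _ ≤ μ (A m ∩ Y n) + μ (A m \ Y n) := measure_le_inter_add_diff μ _ _
        _ ≤ μ (A m ∩ Y n) + δ := add_le_add_right ((key m).trans (hsum_le m)) _
    exact tsub_le_iff_right.mpr h1
  -- final contradiction
  have hfinal : ∀ M : ℕ, (M : ENNReal) * (ε - δ) ≤ μ (Y n) := by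
    intro M
    have hdisjY : (↑(Finset.range M) : Set ℕ).PairwiseDisjoint fun m => A m ∩ Y n := by
      intro j _ k _ hjk
      exact (hdisj hjk).mono Set.inter_subset_left Set.inter_subset_left
    calc (M : ENNReal) * (ε - δ) = ∑ _ ∈ Finset.range M, (ε - δ) := by
          simp [Finset.sum_const, mul_comm]
      _ ≤ ∑ m ∈ Finset.range M, μ (A m ∩ Y n) :=
          Finset.sum_le_sum fun m _ => hlow m
      _ = μ (⋃ m ∈ Finset.range M, A m ∩ Y n) :=
          (measure_biUnion_finset hdisjY fun m _ => (hAmeas m).inter (hYmeas n)).symm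
      _ ≤ μ (Y n) :=
          measure_mono (Set.iUnion₂_subset fun m _ => Set.inter_subset_right)
  have hpos : ε - δ ≠ 0 := by
    rw [← pos_iff_ne_zero]
    exact tsub_pos_of_lt hnδ
  obtain ⟨M, hM⟩ := ENNReal.exists_nat_mul_gt hpos (hYfin n).ne
  exact absurd (hfinal M) (not_le.mpr hM)
end

section
/- Let C be the circle ℝ/2ℤ equipped with its length (Haar) measure, let X = ℤ × C with the measure μ = (counting measure on ℤ) ⊗ (length measure on C), and let w : ℤ → [0,∞) satisfy w_n → 0 as n → +∞ and as n → −∞. Let T : X → X be a measurable bijection with measurable inverse preserving μ such that for every n ∈ ℤ: μ({z ∈ {n} × C : T(z) ∈ {m} × C}) = 0 whenever |m − n| ≥ 2, μ({z ∈ {n} × C : T(z) ∈ {n+1} × C}) ≤ w_n, and μ({z ∈ {n} × C : T(z) ∈ {n−1} × C}) ≤ w_{n−1}. Then T is conservative with respect to μ: for every measurable set s with μ(s) > 0 there exist x ∈ s and an integer n ≥ 1 with T^n(x) ∈ s. -/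
open MeasureTheory Filter

instance : Fact ((0:ℝ) < 2) := ⟨by norm_num⟩

/-- The measure on the staircase cross-section `X = ℤ × (ℝ/2ℤ)`:
counting measure on the levels times the length (Haar) measure on the circle. -/
noncomputable def staircaseSectionMeasure : Measure (ℤ × AddCircle (2:ℝ)) :=
  (Measure.count : Measure ℤ).prod (volume : Measure (AddCircle (2:ℝ)))

instance : SFinite (Measure.count : Measure ℤ) := by rw [Measure.count]; infer_instance

abbrev StairX : Type := ℤ × AddCircle (2:ℝ)

lemma staircase_strip_meas (F : Finset ℤ) :
    staircaseSectionMeasure {z : ℤ × AddCircle (2:ℝ) | z.1 ∈ F} =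
      (F.card : ENNReal) * ENNReal.ofReal 2 := by
  have h : {z : ℤ × AddCircle (2:ℝ) | z.1 ∈ F} = (F : Set ℤ) ×ˢ Set.univ := by
    ext z; simp [Set.mem_prod]
  rw [staircaseSectionMeasure, h, Measure.prod_prod, Measure.count_apply_finset,
    AddCircle.measure_univ]

/-- Conservativity of the first return map of the staircase flow when the step
overlaps `w n` tend to `0` as `n → ±∞` (Proposition 3 of the paper). -/
theorem staircase_return_map_conservative
    (w : ℤ → ℝ) (hw0 : ∀ n, 0 ≤ w n)
    (hwtop : Tendsto w atTop (nhds 0)) (hwbot : Tendsto w atBot (nhds 0))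
    (T S : ℤ × AddCircle (2:ℝ) → ℤ × AddCircle (2:ℝ))
    (hT : Measurable T) (hS : Measurable S)
    (hST : Function.LeftInverse S T) (hTS : Function.RightInverse S T)
    (hpres : MeasurePreserving T staircaseSectionMeasure staircaseSectionMeasure)
    (hfar : ∀ n m : ℤ, 2 ≤ |m - n| →
      staircaseSectionMeasure {z : ℤ × AddCircle (2:ℝ) | z.1 = n ∧ (T z).1 = m} = 0)
    (hup : ∀ n : ℤ,
      staircaseSectionMeasure {z : ℤ × AddCircle (2:ℝ) | z.1 = n ∧ (T z).1 = n + 1}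
        ≤ ENNReal.ofReal (w n))
    (hdown : ∀ n : ℤ,
      staircaseSectionMeasure {z : ℤ × AddCircle (2:ℝ) | z.1 = n ∧ (T z).1 = n - 1}
        ≤ ENNReal.ofReal (w (n - 1))) :
    ∀ s : Set (ℤ × AddCircle (2:ℝ)), MeasurableSet s → 0 < staircaseSectionMeasure s →
      ∃ x ∈ s, ∃ n : ℕ, 1 ≤ n ∧ T^[n] x ∈ s := by
  classical
  set μ := staircaseSectionMeasure with hμdef
  intro s hsm hμs
  by_contra hcon
  push_neg at hcon
  -- hcon : ∀ x ∈ s, ∀ n, 1 ≤ n → T^[n] x ∉ s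
  -- S is measure preserving
  have hSpres : MeasurePreserving S μ μ := by
    refine ⟨hS, ?_⟩
    calc Measure.map S μ = Measure.map S (Measure.map T μ) := by rw [hpres.map_eq]
      _ = Measure.map (S ∘ T) μ := Measure.map_map hS hT
      _ = μ := by rw [hST.comp_eq_id, Measure.map_id]
  have hTSk : ∀ (k : ℕ) (z : StairX), T^[k] (S^[k] z) = z := fun k z => (hTS.iterate k) z
  have hSmeas : ∀ (k : ℕ) {A : Set StairX}, MeasurableSet A → μ (S^[k] ⁻¹' A) = μ A :=
    fun k A hA => (hSpres.iterate k).measure_preimage hA.nullMeasurableSet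
  -- the key wandering disjointness
  have hdisj : ∀ (j k : ℕ), j < k → ∀ z : StairX, S^[j] z ∈ s → S^[k] z ∈ s → False := by
    intro j k hjk z hj hk
    have h2 : S^[k - j] (S^[j] z) = S^[k] z := by
      rw [← Function.iterate_add_apply]; congr 1; omega
    have h1 : T^[k - j] (S^[k] z) = S^[j] z := by
      rw [← h2, hTSk]
    exact hcon _ hk (k - j) (by omega) (h1 ▸ hj)
  have hpairwise : ∀ (W : ℕ → Set StairX), (∀ k, W k ⊆ s) →
      Pairwise (Function.onFun Disjoint (fun k => S^[k] ⁻¹' W k)) := by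
    intro W hW j k hjk
    rw [Function.onFun, Set.disjoint_left]
    intro z hzj hzk
    rcases lt_or_gt_of_ne hjk with h | h
    · exact hdisj j k h z (hW j hzj) (hW k hzk)
    · exact hdisj k j h z (hW k hzk) (hW j hzj)
  -- bad set
  set bad : Set StairX := {z : StairX | 2 ≤ |(T z).1 - z.1|} with hbaddef
  have hbadm : MeasurableSet bad := by
    have hm : Measurable fun z : StairX => (T z).1 - z.1 := hT.fst.sub measurable_fst
    exact hm (show MeasurableSet {m : ℤ | 2 ≤ |m|} from trivial)
  have hbad0 : μ bad = 0 := by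
    have hsub : bad ⊆ ⋃ p : ℤ × ℤ,
        {z : StairX | z.1 = p.1 ∧ (T z).1 = p.2 ∧ 2 ≤ |p.2 - p.1|} := by
      intro z hz
      exact Set.mem_iUnion.2 ⟨(z.1, (T z).1), rfl, rfl, hz⟩
    refine le_antisymm (le_trans (measure_mono hsub) ?_) zero_le
    refine le_trans (measure_iUnion_le _) (le_of_eq (ENNReal.tsum_eq_zero.2 ?_))
    rintro ⟨n, m⟩
    by_cases h2 : 2 ≤ |m - n|
    · refine measure_mono_null (fun z hz => ?_) (hfar n m h2)
      exact ⟨hz.1, hz.2.1⟩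
    · have : {z : StairX | z.1 = n ∧ (T z).1 = m ∧ 2 ≤ |m - n|} = ∅ := by
        ext z; simp only [Set.mem_setOf_eq, Set.mem_empty_iff_false, iff_false]
        rintro ⟨_, _, h⟩; exact h2 h
      rw [this, measure_empty]
  set Bad : Set StairX := ⋃ k : ℕ, T^[k] ⁻¹' bad with hBaddef
  have hBadm : MeasurableSet Bad := MeasurableSet.iUnion fun k => (hT.iterate k) hbadm
  have hBad0 : μ Bad = 0 := by
    refine measure_iUnion_null fun k => ?_
    rw [(hpres.iterate k).measure_preimage hbadm.nullMeasurableSet]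
    exact hbad0
  -- find a level with positive measure
  have hlevm : ∀ (k : ℕ) (n : ℤ), MeasurableSet {x : StairX | (T^[k] x).1 = n} := by
    intro k n
    have hm : Measurable fun x : StairX => (T^[k] x).1 := (hT.iterate k).fst
    exact hm (measurableSet_singleton n)
  obtain ⟨n₀, hn₀⟩ : ∃ n₀ : ℤ, 0 < μ (s ∩ {z : StairX | z.1 = n₀}) := by
    by_contra hno
    push_neg at hno
    have hcover : s = ⋃ n : ℤ, s ∩ {z : StairX | z.1 = n} := by
      ext z; simp [Set.mem_iUnion]
    have : μ s = 0 := by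
      rw [hcover]
      exact measure_iUnion_null fun n => le_antisymm (hno n) zero_le
    exact absurd this (ne_of_gt hμs)
  set s' : Set StairX := (s ∩ {z : StairX | z.1 = n₀}) \ Bad with hs'def
  have hs'm : MeasurableSet s' :=
    (hsm.inter (measurable_fst (measurableSet_singleton n₀))).diff hBadm
  have hs'sub : s' ⊆ s := fun z hz => hz.1.1
  have hμs' : 0 < μ s' := by
    rw [hs'def, measure_diff_null hBad0]
    exact hn₀
  have hμs'fin : μ s' ≠ ⊤ := by
    have hle : μ s' ≤ μ {z : StairX | z.1 ∈ ({n₀} : Finset ℤ)} := by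
      refine measure_mono fun z hz => ?_
      simpa using hz.1.2
    rw [staircase_strip_meas ({n₀} : Finset ℤ)] at hle
    exact ne_top_of_le_ne_top
      (ENNReal.mul_ne_top (ENNReal.natCast_ne_top _) ENNReal.ofReal_ne_top) hle
  -- choose thresholds
  set c : ℝ := (μ s').toReal with hcdef
  have hc0 : 0 < c := ENNReal.toReal_pos (ne_of_gt hμs') hμs'fin
  obtain ⟨N, hNw, hNge⟩ : ∃ N : ℤ, w N < c / 2 ∧ n₀ ≤ N := by
    have h1 := hwtop.eventually (gt_mem_nhds (by positivity : (0:ℝ) < c / 2))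
    obtain ⟨N, h, h'⟩ := (h1.and (eventually_ge_atTop n₀)).exists
    exact ⟨N, h, h'⟩
  obtain ⟨M', hMw, hMle⟩ : ∃ M' : ℤ, w M' < c / 2 ∧ M' ≤ n₀ - 1 := by
    have h1 := hwbot.eventually (gt_mem_nhds (by positivity : (0:ℝ) < c / 2))
    obtain ⟨M', h, h'⟩ := (h1.and (eventually_le_atBot (n₀ - 1))).exists
    exact ⟨M', h, h'⟩
  set M : ℤ := M' + 1 with hMdef
  have hMn₀ : M ≤ n₀ := by omega
  -- crossing predicates
  set P : StairX → ℕ → Prop := fun x k => (T^[k] x).1 = N ∧ (T^[k+1] x).1 = N + 1 with hPdef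
  set Q : StairX → ℕ → Prop := fun x k => (T^[k] x).1 = M ∧ (T^[k+1] x).1 = M - 1 with hQdef
  set U : ℕ → Set StairX := fun k => {x ∈ s' | P x k} with hUdef
  set V : ℕ → Set StairX := fun k => {x ∈ s' | Q x k} with hVdef
  set R : Set StairX := {x ∈ s' | (∀ k, ¬ P x k) ∧ (∀ k, ¬ Q x k)} with hRdef
  have hUm : ∀ k, MeasurableSet (U k) := fun k =>
    hs'm.inter ((hlevm k N).inter (hlevm (k+1) (N+1)))
  have hVm : ∀ k, MeasurableSet (V k) := fun k =>
    hs'm.inter ((hlevm k M).inter (hlevm (k+1) (M-1)))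
  have hRm : MeasurableSet R := by
    have : R = s' \ ((⋃ k, U k) ∪ (⋃ k, V k)) := by
      ext x
      simp only [hRdef, Set.mem_setOf_eq, Set.mem_diff, Set.mem_union, Set.mem_iUnion,
        hUdef, hVdef, not_or, not_exists]
      constructor
      · rintro ⟨hx, h1, h2⟩
        exact ⟨hx, fun k => fun h => h1 k h.2, fun k h => h2 k h.2⟩
      · rintro ⟨hx, h1, h2⟩
        exact ⟨hx, fun k hk => h1 k ⟨hx, hk⟩, fun k hk => h2 k ⟨hx, hk⟩⟩
    rw [this]
    exact hs'm.diff ((MeasurableSet.iUnion hUm).union (MeasurableSet.iUnion hVm))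
  -- crossing set bounds
  have hAbound : μ (⋃ k, U k) ≤ ENNReal.ofReal (w N) := by
    have hDsub : ∀ k, S^[k] ⁻¹' (U k) ⊆ {z : StairX | z.1 = N ∧ (T z).1 = N + 1} := by
      intro k z hz
      have hx : S^[k] z ∈ U k := hz
      have hz1 : T^[k] (S^[k] z) = z := hTSk k z
      have hP := hx.2
      constructor
      · rw [← hz1]; exact hP.1
      · have : T^[k+1] (S^[k] z) = T z := by
          rw [Function.iterate_succ_apply', hz1]
        rw [← this]; exact hP.2
    calc μ (⋃ k, U k) ≤ ∑' k, μ (U k) := measure_iUnion_le _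
      _ = ∑' k, μ (S^[k] ⁻¹' (U k)) := by
          refine tsum_congr fun k => (hSmeas k (hUm k)).symm
      _ = μ (⋃ k, S^[k] ⁻¹' (U k)) := by
          refine (measure_iUnion (μ := μ) ?_ fun k => (hS.iterate k) (hUm k)).symm
          exact hpairwise U fun k x hx => hs'sub hx.1
      _ ≤ μ {z : StairX | z.1 = N ∧ (T z).1 = N + 1} :=
          measure_mono (Set.iUnion_subset hDsub)
      _ ≤ ENNReal.ofReal (w N) := hup N
  have hBbound : μ (⋃ k, V k) ≤ ENNReal.ofReal (w (M - 1)) := by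
    have hDsub : ∀ k, S^[k] ⁻¹' (V k) ⊆ {z : StairX | z.1 = M ∧ (T z).1 = M - 1} := by
      intro k z hz
      have hx : S^[k] z ∈ V k := hz
      have hz1 : T^[k] (S^[k] z) = z := hTSk k z
      have hQ := hx.2
      constructor
      · rw [← hz1]; exact hQ.1
      · have : T^[k+1] (S^[k] z) = T z := by
          rw [Function.iterate_succ_apply', hz1]
        rw [← this]; exact hQ.2
    calc μ (⋃ k, V k) ≤ ∑' k, μ (V k) := measure_iUnion_le _
      _ = ∑' k, μ (S^[k] ⁻¹' (V k)) := by
          refine tsum_congr fun k => (hSmeas k (hVm k)).symm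
      _ = μ (⋃ k, S^[k] ⁻¹' (V k)) := by
          refine (measure_iUnion (μ := μ) ?_ fun k => (hS.iterate k) (hVm k)).symm
          exact hpairwise V fun k x hx => hs'sub hx.1
      _ ≤ μ {z : StairX | z.1 = M ∧ (T z).1 = M - 1} :=
          measure_mono (Set.iUnion_subset hDsub)
      _ ≤ ENNReal.ofReal (w (M - 1)) := hdown M
  -- R has measure zero
  have hRlev : ∀ x ∈ R, ∀ k : ℕ, M ≤ (T^[k] x).1 ∧ (T^[k] x).1 ≤ N := by
    rintro x ⟨hxs', hnP, hnQ⟩ k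
    induction k with
    | zero =>
        have : x.1 = n₀ := hxs'.1.2
        simp only [Function.iterate_zero, id_eq, this]
        omega
    | succ k ih =>
        have hnotbad : T^[k] x ∉ bad := by
          intro hb
          exact hxs'.2 (Set.mem_iUnion.2 ⟨k, hb⟩)
        have hstep0 : |(T (T^[k] x)).1 - (T^[k] x).1| ≤ 1 := by
          by_contra h
          exact hnotbad (by simp only [hbaddef, Set.mem_setOf_eq]; omega)
        have hstep : |(T^[k+1] x).1 - (T^[k] x).1| ≤ 1 := by
          rw [Function.iterate_succ_apply']; exact hstep0
        obtain ⟨hl, hr⟩ := abs_le.mp hstep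
        have hNP := hnP k
        have hNQ := hnQ k
        simp only [hPdef, hQdef, not_and] at hNP hNQ
        constructor
        · by_contra h
          push_neg at h
          have h1 : (T^[k+1] x).1 = M - 1 := by omega
          have h2 : (T^[k] x).1 = M := by omega
          exact hNQ h2 h1
        · by_contra h
          push_neg at h
          have h1 : (T^[k+1] x).1 = N + 1 := by omega
          have h2 : (T^[k] x).1 = N := by omega
          exact hNP h2 h1
  have hR0 : μ R = 0 := by
    set strip : Set StairX := {z : StairX | z.1 ∈ Finset.Icc M N} with hstripdef
    have hstripval := staircase_strip_meas (Finset.Icc M N)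
    have hstripfin : μ strip ≠ ⊤ := by
      rw [hstripdef, hμdef, hstripval]
      exact ENNReal.mul_ne_top (ENNReal.natCast_ne_top _) ENNReal.ofReal_ne_top
    have hEsub : ∀ k : ℕ, S^[k] ⁻¹' R ⊆ strip := by
      intro k z hz
      have hx : S^[k] z ∈ R := hz
      have hz1 : T^[k] (S^[k] z) = z := hTSk k z
      have := hRlev _ hx k
      rw [hz1] at this
      simp only [hstripdef, Set.mem_setOf_eq, Finset.mem_Icc]
      exact this
    have hKbound : ∀ K : ℕ, (K : ENNReal) * μ R ≤ μ strip := by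
      intro K
      have hdisjE : Pairwise (Function.onFun Disjoint (fun k : ℕ => S^[k] ⁻¹' R)) :=
        hpairwise (fun _ => R) fun k x hx => hs'sub hx.1
      have h1 : ∑ k ∈ Finset.range K, μ (S^[k] ⁻¹' R) =
          μ (⋃ k ∈ Finset.range K, S^[k] ⁻¹' R) := by
        refine (measure_biUnion_finset (μ := μ) ?_ fun k _ => (hS.iterate k) hRm).symm
        intro a _ b _ hab
        exact hdisjE hab
      have h2 : ∀ k, μ (S^[k] ⁻¹' R) = μ R := fun k => hSmeas k hRm
      calc (K : ENNReal) * μ R = ∑ k ∈ Finset.range K, μ (S^[k] ⁻¹' R) := by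
            simp [h2, Finset.sum_const, mul_comm]
        _ = μ (⋃ k ∈ Finset.range K, S^[k] ⁻¹' R) := h1
        _ ≤ μ strip := measure_mono (Set.iUnion₂_subset fun k _ => hEsub k)
    by_contra hR0'
    have hRpos : μ R ≠ 0 := hR0'
    obtain ⟨K, hK⟩ := ENNReal.exists_nat_gt (ENNReal.div_lt_top hstripfin hRpos).ne
    have : μ strip < (K : ENNReal) * μ R := by
      rw [← ENNReal.div_lt_iff (Or.inl hRpos) (Or.inr hstripfin)] at *
      exact hK
    exact absurd (hKbound K) (not_le.mpr this)
  -- conclusion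
  have hs'cover : s' ⊆ (⋃ k, U k) ∪ (⋃ k, V k) ∪ R := by
    intro x hx
    by_cases h1 : ∃ k, P x k
    · obtain ⟨k, hk⟩ := h1
      exact Or.inl (Or.inl (Set.mem_iUnion.2 ⟨k, hx, hk⟩))
    by_cases h2 : ∃ k, Q x k
    · obtain ⟨k, hk⟩ := h2
      exact Or.inl (Or.inr (Set.mem_iUnion.2 ⟨k, hx, hk⟩))
    push_neg at h1 h2
    exact Or.inr ⟨hx, h1, h2⟩
  have hfinal : μ s' < μ s' := by
    calc μ s' ≤ μ ((⋃ k, U k) ∪ (⋃ k, V k) ∪ R) := measure_mono hs'cover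
      _ ≤ μ ((⋃ k, U k) ∪ (⋃ k, V k)) + μ R := measure_union_le _ _
      _ = μ ((⋃ k, U k) ∪ (⋃ k, V k)) := by rw [hR0, add_zero]
      _ ≤ μ (⋃ k, U k) + μ (⋃ k, V k) := measure_union_le _ _
      _ ≤ ENNReal.ofReal (w N) + ENNReal.ofReal (w (M - 1)) := add_le_add hAbound hBbound
      _ = ENNReal.ofReal (w N + w (M - 1)) := (ENNReal.ofReal_add (hw0 N) (hw0 (M-1))).symm
      _ < ENNReal.ofReal c := by
          refine (ENNReal.ofReal_lt_ofReal_iff hc0).2 ?_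
          have : w (M - 1) = w M' := by rw [hMdef]; ring_nf
          rw [this]
          linarith
      _ = μ s' := by rw [hcdef, ENNReal.ofReal_toReal hμs'fin]
  exact lt_irrefl _ hfinal
end

section
/- Let K and X be standard Borel spaces, and let T̂ : K → K, T : X → X and j : K → X be Borel maps satisfying j ∘ T̂ = T ∘ j. Assume there is a countable set C ⊆ X such that j is injective on K \ j⁻¹(C). Assume T admits exactly one T-invariant Borel probability measure μ, and that μ has no atoms. Then T̂ admits at most one T̂-invariant Borel probability measure. -/
open MeasureTheory Filter

/-- Lemma 9 of the paper's appendix (abstract form): if `j` semiconjugates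
`T̂ : K → K` to `T : X → X`, is injective outside the preimage of a countable
set, and `T` is uniquely ergodic with atomless invariant measure, then `T̂`
has at most one invariant Borel probability measure. -/
theorem at_most_one_invariant_measure_of_extension
    {K X : Type*} [MeasurableSpace K] [StandardBorelSpace K]
    [MeasurableSpace X] [StandardBorelSpace X]
    (That : K → K) (T : X → X) (j : K → X)
    (hThat : Measurable That) (hT : Measurable T) (hj : Measurable j)
    (hconj : j ∘ That = T ∘ j)
    (C : Set X) (hC : C.Countable)
    (hinj : Set.InjOn j ((j ⁻¹' C)ᶜ))
    (μ : Measure X) [IsProbabilityMeasure μ]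
    (hinv : ∀ s : Set X, MeasurableSet s → μ (T ⁻¹' s) = μ s)
    (huniq : ∀ ν : Measure X, IsProbabilityMeasure ν →
      (∀ s : Set X, MeasurableSet s → ν (T ⁻¹' s) = ν s) → ν = μ)
    (hatomless : ∀ p : X, μ {p} = 0) :
    ∀ ν₁ ν₂ : Measure K, IsProbabilityMeasure ν₁ → IsProbabilityMeasure ν₂ →
      (∀ s : Set K, MeasurableSet s → ν₁ (That ⁻¹' s) = ν₁ s) →
      (∀ s : Set K, MeasurableSet s → ν₂ (That ⁻¹' s) = ν₂ s) →
      ν₁ = ν₂ := by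
  intro ν₁ ν₂ h₁ h₂ hi₁ hi₂
  have hCmeas : MeasurableSet C := hC.measurableSet
  -- the pushforward of any invariant probability measure equals μ
  have key : ∀ ν : Measure K, IsProbabilityMeasure ν →
      (∀ s : Set K, MeasurableSet s → ν (That ⁻¹' s) = ν s) → ν.map j = μ := by
    intro ν hν hiν
    refine huniq _ (Measure.isProbabilityMeasure_map hj.aemeasurable) ?_
    intro s hs
    rw [Measure.map_apply hj (hT hs), Measure.map_apply hj hs,
      ← Set.preimage_comp, ← hconj, Set.preimage_comp]
    exact hiν _ (hj hs)
  have hmap1 := key ν₁ h₁ hi₁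
  have hmap2 := key ν₂ h₂ hi₂
  have : NullSingletonClass μ := ⟨hatomless⟩
  have hμC : μ C = 0 := hC.measure_zero μ
  -- both ν's give zero mass to j ⁻¹' C
  have hν1C : ν₁ (j ⁻¹' C) = 0 := by
    rw [← Measure.map_apply hj hCmeas, hmap1]; exact hμC
  have hν2C : ν₂ (j ⁻¹' C) = 0 := by
    rw [← Measure.map_apply hj hCmeas, hmap2]; exact hμC
  set A : Set K := (j ⁻¹' C)ᶜ with hA
  have hAmeas : MeasurableSet A := (hj hCmeas).compl
  ext s hs
  have hsa : MeasurableSet (s ∩ A) := hs.inter hAmeas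
  have himg : MeasurableSet (j '' (s ∩ A)) :=
    hsa.image_of_measurable_injOn hj (hinj.mono Set.inter_subset_right)
  have hset : j ⁻¹' (j '' (s ∩ A)) ∩ A = s ∩ A := by
    ext x
    constructor
    · rintro ⟨⟨y, hy, hxy⟩, hxA⟩
      have : y = x := hinj hy.2 hxA hxy
      exact ⟨this ▸ hy.1, hxA⟩
    · intro hx
      exact ⟨Set.mem_image_of_mem j hx, hx.2⟩
  calc ν₁ s = ν₁ (s ∩ A) := (measure_inter_conull (by rw [hA, compl_compl]; exact hν1C)).symm
    _ = ν₁ (j ⁻¹' (j '' (s ∩ A)) ∩ A) := by rw [hset]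
    _ = ν₁ (j ⁻¹' (j '' (s ∩ A))) := measure_inter_conull (by rw [hA, compl_compl]; exact hν1C)
    _ = μ (j '' (s ∩ A)) := by rw [← Measure.map_apply hj himg, hmap1]
    _ = ν₂ (j ⁻¹' (j '' (s ∩ A))) := by rw [← Measure.map_apply hj himg, hmap2]
    _ = ν₂ (j ⁻¹' (j '' (s ∩ A)) ∩ A) := (measure_inter_conull (by rw [hA, compl_compl]; exact hν2C)).symm
    _ = ν₂ (s ∩ A) := by rw [hset]
    _ = ν₂ s := measure_inter_conull (by rw [hA, compl_compl]; exact hν2C)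
end
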